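/- Fix n, a weight vector ω : Fin n → ℕ, and m delegators each of weight 1 who each independently delegate to a uniformly random voter. Let P^d(A | m) be the resulting probability that A wins (each voter independently supports A with probability p ∈ (0,1), ties broken with probability 1/2). If n is odd, then lim_{m→∞} P^d(A | m) = P^c_{EW}(A), the probability A wins when all n voters have equal weight 1 and no delegation occurs. -/

import Mathlib

open Finset Filter

/-- Winning probability of A given that exactly the voters in `S` support A. -/
noncomputable def G {n : ℕ} (ω : Fin n → ℕ) (S : Finset (Fin n)) : ℝ :=
  if 2 * ∑ j ∈ S, ω j > ∑ j, ω j then 1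
  else if 2 * ∑ j ∈ S, ω j = ∑ j, ω j then 1/2
  else 0

/-- Probability that A wins when each voter independently supports A with probability `p`. -/
noncomputable def PA {n : ℕ} (p : ℝ) (ω : Fin n → ℕ) : ℝ :=
  ∑ S : Finset (Fin n), p ^ S.card * (1 - p) ^ (n - S.card) * G ω S

/-- Post-delegation weights: each of `m` unit-weight delegators `i` adds one vote to voter `d i`. -/
def wpost {n m : ℕ} (ω : Fin n → ℕ) (d : Fin m → Fin n) : Fin n → ℕ :=
  fun j => ω j + (Finset.univ.filter (fun i => d i = j)).card

/-- Probability that A wins after `m` unit-weight delegators each delegate to a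
uniformly random voter, independently. -/
noncomputable def Pd {n : ℕ} (p : ℝ) (ω : Fin n → ℕ) (m : ℕ) : ℝ :=
  ∑ d : Fin m → Fin n, ((1 : ℝ) / n) ^ m * PA p (wpost ω d)

noncomputable def Bnum {n m : ℕ} (S : Finset (Fin n)) (d : Fin m → Fin n) : ℕ :=
  (Finset.univ.filter (fun i => d i ∈ S)).card

lemma G_nonneg {n : ℕ} (ω : Fin n → ℕ) (S : Finset (Fin n)) : 0 ≤ G ω S := by
  unfold G; split_ifs <;> norm_num

lemma G_le_one {n : ℕ} (ω : Fin n → ℕ) (S : Finset (Fin n)) : G ω S ≤ 1 := by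
  unfold G; split_ifs <;> norm_num

lemma mgf {n m : ℕ} (S : Finset (Fin n)) (t : ℝ) :
    ∑ d : Fin m → Fin n, t ^ (Bnum S d) =
      ((S.card : ℝ) * t + ((n : ℝ) - S.card)) ^ m := by
  classical
  have h1 : ∀ d : Fin m → Fin n, t ^ (Bnum S d) =
      ∏ i, (if d i ∈ S then t else 1) := by
    intro d
    rw [Finset.prod_ite, Finset.prod_const, Finset.prod_const, one_pow, mul_one]
    rfl
  simp_rw [h1]
  rw [← Fintype.sum_pow (fun x : Fin n => if x ∈ S then t else 1) m]
  congr 1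
  rw [Finset.sum_ite, Finset.sum_const, Finset.sum_const]
  have h3 : Finset.univ.filter (fun x : Fin n => x ∈ S) = S := by ext x; simp
  have h2 : (Finset.univ.filter (fun x : Fin n => ¬ x ∈ S)).card = n - S.card := by
    rw [Finset.filter_not]
    simp [Finset.card_sdiff_of_subset (Finset.subset_univ S)]
  rw [h3, h2]
  have := S.card_le_univ
  simp only [smul_eq_mul, mul_one, nsmul_eq_mul]
  rw [Nat.cast_sub (by simpa using this)]

lemma sum_wpost_S {n m : ℕ} (ω : Fin n → ℕ) (d : Fin m → Fin n) (S : Finset (Fin n)) :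
    ∑ j ∈ S, wpost ω d j = (∑ j ∈ S, ω j) + Bnum S d := by
  classical
  unfold wpost Bnum
  rw [Finset.sum_add_distrib]
  congr 1
  simp_rw [Finset.card_filter]
  rw [Finset.sum_comm]
  congr 1
  ext i
  simp

lemma sum_wpost_univ {n m : ℕ} (ω : Fin n → ℕ) (d : Fin m → Fin n) :
    ∑ j, wpost ω d j = (∑ j, ω j) + m := by
  classical
  have := sum_wpost_S ω d Finset.univ
  simpa [Bnum] using this

lemma wsum {n m : ℕ} (hn : 0 < n) (S : Finset (Fin n)) (t : ℝ) :
    ∑ d : Fin m → Fin n, ((1:ℝ)/n)^m * t ^ (Bnum S d) =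
      (((S.card : ℝ) * t + ((n:ℝ) - S.card))/n)^m := by
  rw [← Finset.mul_sum, mgf, div_pow]
  have hn' : (n:ℝ) ≠ 0 := by exact_mod_cast hn.ne'
  rw [div_pow]
  field_simp
  rw [one_pow, one_mul]

lemma sum_unif {n m : ℕ} (hn : 0 < n) :
    ∑ _d : Fin m → Fin n, ((1:ℝ)/n)^m = 1 := by
  rw [Finset.sum_const, Finset.card_univ, Fintype.card_fun]
  simp only [Fintype.card_fin, smul_eq_mul, one_div, inv_pow, nsmul_eq_mul]
  push_cast
  rw [mul_inv_cancel₀ (pow_ne_zero _ (by exact_mod_cast hn.ne'))]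

lemma key {n : ℕ} (hn : Odd n) (ω : Fin n → ℕ) (S : Finset (Fin n)) :
    Tendsto (fun m => ∑ d : Fin m → Fin n, ((1:ℝ)/n)^m * G (wpost ω d) S) atTop
      (nhds (G (fun _ : Fin n => 1) S)) := by
  classical
  have hn0 : 0 < n := hn.pos
  set k := S.card with hkdef
  have hkn : 2 * k ≠ n := by
    intro h
    exact (Nat.not_even_iff_odd.mpr hn) ⟨k, by omega⟩
  have hkle : k ≤ n := by
    have := S.card_le_univ
    simpa using this
  have hkleR : (k:ℝ) ≤ n := by exact_mod_cast hkle
  have hG1 : G (fun _ : Fin n => 1) S = if n < 2 * k then 1 else 0 := by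
    unfold G
    simp only [Finset.sum_const, Finset.card_univ, Fintype.card_fin, smul_eq_mul, mul_one]
    rw [if_neg hkn]
  set c : ℤ := (∑ j, ω j : ℤ) - 2 * (∑ j ∈ S, ω j : ℤ) with hc
  -- generic summed Chernoff bound
  have sumbd : ∀ (lam : ℝ), 0 < lam → ∀ (m : ℕ) (F : (Fin m → Fin n) → ℝ),
      (∀ d, F d ≤ lam ^ (-(m:ℤ)-c) * (lam^2) ^ (Bnum S d)) →
      ∑ d : Fin m → Fin n, ((1:ℝ)/n)^m * F d ≤
        lam^(-c) * (((k:ℝ)*lam^2 + ((n:ℝ)-k))/((n:ℝ)*lam))^m := by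
    intro lam hl m F hF
    have hle : ∑ d : Fin m → Fin n, ((1:ℝ)/n)^m * F d ≤
        ∑ d : Fin m → Fin n, ((1:ℝ)/n)^m * (lam ^ (-(m:ℤ)-c) * (lam^2) ^ (Bnum S d)) := by
      apply Finset.sum_le_sum
      intro d _
      exact mul_le_mul_of_nonneg_left (hF d) (by positivity)
    refine hle.trans_eq ?_
    simp_rw [mul_left_comm (((1:ℝ)/n)^m)]
    rw [← Finset.mul_sum, wsum hn0]
    have h1 : lam ^ (-(m:ℤ)-c) = lam^(-c) / lam^m := by
      rw [← zpow_natCast lam m, ← zpow_sub₀ hl.ne']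
      congr 1
      ring
    rw [h1]
    rw [div_mul_eq_mul_div, mul_div_assoc]
    congr 1
    rw [div_pow, div_div, ← mul_pow, ← div_pow]
  have hrw : ∀ (lam : ℝ), lam ≠ 0 → ∀ (m : ℕ) (d : Fin m → Fin n),
      lam ^ (-(m:ℤ)-c) * (lam^2) ^ (Bnum S d) = lam ^ (-(m:ℤ) - c + 2*(Bnum S d : ℤ)) := by
    intro lam hl m d
    rw [zpow_add₀ hl]
    congr 1
    rw [← pow_mul, ← zpow_natCast]
    norm_cast
  clear_value k
  rcases lt_or_gt_of_ne hkn with hlt | hgt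
  -- Case 2k < n : limit is 0
  · have hG10 : G (fun _ : Fin n => 1) S = 0 := by rw [hG1, if_neg (by omega)]
    rw [hG10]
    set lam : ℝ := if k = 0 then 2 else (n:ℝ)/(2*k) with hlam
    have hl1 : 1 < lam := by
      rw [hlam]
      split_ifs with h
      · norm_num
      · rw [lt_div_iff₀ (by positivity)]
        have h2 : 2*(k:ℝ) < n := by exact_mod_cast hlt
        linarith
    have hl0 : 0 < lam := lt_trans one_pos hl1
    have hnum : (k:ℝ)*lam^2 + ((n:ℝ)-k) < (n:ℝ)*lam := by
      rw [hlam]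
      split_ifs with h
      · have hnR : (0:ℝ) < n := by exact_mod_cast hn0
        simp only [h, Nat.cast_zero, zero_mul, zero_add, sub_zero]
        linarith
      · have hk0 : (0:ℝ) < k := by
          have : 0 < k := Nat.pos_of_ne_zero h
          exact_mod_cast this
        have h2kn : 2*(k:ℝ) < n := by exact_mod_cast hlt
        have hid : (n:ℝ)*((n:ℝ)/(2*(k:ℝ))) - ((k:ℝ)*(((n:ℝ)/(2*(k:ℝ)))^2) + ((n:ℝ)-(k:ℝ)))
            = ((n:ℝ)-2*(k:ℝ))^2/(4*(k:ℝ)) := by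
          field_simp
          ring
        have hkey : (0:ℝ) < ((n:ℝ)-2*(k:ℝ))^2/(4*(k:ℝ)) :=
          div_pos (pow_pos (by linarith) 2) (by positivity)
        linarith [hid, hkey]
    have hpt : ∀ (m : ℕ) (d : Fin m → Fin n),
        G (wpost ω d) S ≤ lam ^ (-(m:ℤ)-c) * (lam^2) ^ (Bnum S d) := by
      intro m d
      by_cases hw : ∑ j, wpost ω d j ≤ 2 * ∑ j ∈ S, wpost ω d j
      · have hB : 0 ≤ -(m:ℤ) - c + 2 * (Bnum S d : ℤ) := by
          rw [sum_wpost_univ, sum_wpost_S] at hw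
          zify at hw
          rw [hc]
          push_cast at hw ⊢
          omega
        calc G (wpost ω d) S ≤ 1 := G_le_one _ _
          _ ≤ _ := by rw [hrw lam hl0.ne' m d]; exact one_le_zpow₀ hl1.le hB
      · push_neg at hw
        have hg : G (wpost ω d) S = 0 := by
          unfold G
          rw [if_neg (by omega), if_neg (by omega)]
        rw [hg]
        positivity
    have hub : ∀ m : ℕ, ∑ d : Fin m → Fin n, ((1:ℝ)/n)^m * G (wpost ω d) S ≤
        lam^(-c) * (((k:ℝ)*lam^2 + ((n:ℝ)-k))/((n:ℝ)*lam))^m :=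
      fun m => sumbd lam hl0 m _ (hpt m)
    have hlb : ∀ m : ℕ, 0 ≤ ∑ d : Fin m → Fin n, ((1:ℝ)/n)^m * G (wpost ω d) S :=
      fun m => Finset.sum_nonneg fun d _ => mul_nonneg (by positivity) (G_nonneg _ _)
    have hr0 : 0 ≤ ((k:ℝ)*lam^2 + ((n:ℝ)-k))/((n:ℝ)*lam) :=
      div_nonneg (add_nonneg (by positivity) (by linarith [hkleR])) (by positivity)
    have hr1 : ((k:ℝ)*lam^2 + ((n:ℝ)-k))/((n:ℝ)*lam) < 1 := by
      rw [div_lt_one (by positivity)]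
      exact hnum
    have hg0 : Tendsto (fun m : ℕ => lam^(-c) * (((k:ℝ)*lam^2 + ((n:ℝ)-k))/((n:ℝ)*lam))^m)
        atTop (nhds 0) := by
      have := (tendsto_pow_atTop_nhds_zero_of_lt_one hr0 hr1).const_mul (lam^(-c))
      simpa using this
    exact squeeze_zero hlb hub hg0
  -- Case 2k > n : limit is 1
  · have hG11 : G (fun _ : Fin n => 1) S = 1 := by rw [hG1, if_pos (by omega)]
    rw [hG11]
    have hk0 : 0 < k := by omega
    have hk0R : (0:ℝ) < k := by exact_mod_cast hk0
    have h2kn : (n:ℝ) < 2*k := by exact_mod_cast hgt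
    set lam : ℝ := (n:ℝ)/(2*k) with hlam
    have hl0 : 0 < lam := by
      rw [hlam]
      have : (0:ℝ) < n := by exact_mod_cast hn0
      positivity
    have hl1 : lam < 1 := by
      rw [hlam, div_lt_one (by positivity)]
      linarith
    have hnum : (k:ℝ)*lam^2 + ((n:ℝ)-k) < (n:ℝ)*lam := by
      have hid : (n:ℝ)*lam - ((k:ℝ)*lam^2 + ((n:ℝ)-(k:ℝ)))
          = ((n:ℝ)-2*(k:ℝ))^2/(4*(k:ℝ)) := by
        rw [hlam]
        field_simp
        ring
      have hsq : ((n:ℝ)-2*(k:ℝ))^2 = ((2*(k:ℝ)-(n:ℝ)))^2 := by ring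
      have hkey : (0:ℝ) < ((n:ℝ)-2*(k:ℝ))^2/(4*(k:ℝ)) := by
        rw [hsq]
        exact div_pos (pow_pos (by linarith) 2) (by positivity)
      linarith [hid, hkey]
    have hpt : ∀ (m : ℕ) (d : Fin m → Fin n),
        1 - G (wpost ω d) S ≤ lam ^ (-(m:ℤ)-c) * (lam^2) ^ (Bnum S d) := by
      intro m d
      by_cases hw : ∑ j, wpost ω d j < 2 * ∑ j ∈ S, wpost ω d j
      · have hg : G (wpost ω d) S = 1 := by
          unfold G
          rw [if_pos hw]
        rw [hg]
        simp only [sub_self]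
        positivity
      · push_neg at hw
        have hB : -(m:ℤ) - c + 2 * (Bnum S d : ℤ) ≤ 0 := by
          rw [sum_wpost_univ, sum_wpost_S] at hw
          zify at hw
          rw [hc]
          push_cast at hw ⊢
          omega
        calc 1 - G (wpost ω d) S ≤ 1 := by linarith [G_nonneg (wpost ω d) S]
          _ ≤ _ := by
            rw [hrw lam hl0.ne' m d]
            exact one_le_zpow_of_nonpos₀ hl0 hl1.le hB
    have hub : ∀ m : ℕ, ∑ d : Fin m → Fin n, ((1:ℝ)/n)^m * (1 - G (wpost ω d) S) ≤
        lam^(-c) * (((k:ℝ)*lam^2 + ((n:ℝ)-k))/((n:ℝ)*lam))^m :=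
      fun m => sumbd lam hl0 m _ (hpt m)
    have hEm : ∀ m : ℕ, ∑ d : Fin m → Fin n, ((1:ℝ)/n)^m * (1 - G (wpost ω d) S)
        = 1 - ∑ d : Fin m → Fin n, ((1:ℝ)/n)^m * G (wpost ω d) S := by
      intro m
      simp_rw [mul_sub, mul_one]
      rw [Finset.sum_sub_distrib, sum_unif hn0]
    have hlow : ∀ m : ℕ, 1 - lam^(-c) * (((k:ℝ)*lam^2 + ((n:ℝ)-k))/((n:ℝ)*lam))^m ≤
        ∑ d : Fin m → Fin n, ((1:ℝ)/n)^m * G (wpost ω d) S := by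
      intro m
      have := hub m
      rw [hEm m] at this
      linarith
    have hupp : ∀ m : ℕ, ∑ d : Fin m → Fin n, ((1:ℝ)/n)^m * G (wpost ω d) S ≤ 1 := by
      intro m
      calc ∑ d : Fin m → Fin n, ((1:ℝ)/n)^m * G (wpost ω d) S
          ≤ ∑ _d : Fin m → Fin n, ((1:ℝ)/n)^m := by
            apply Finset.sum_le_sum
            intro d _
            exact mul_le_of_le_one_right (by positivity) (G_le_one _ _)
        _ = 1 := sum_unif hn0
    have hr0 : 0 ≤ ((k:ℝ)*lam^2 + ((n:ℝ)-k))/((n:ℝ)*lam) :=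
      div_nonneg (add_nonneg (by positivity) (by linarith [hkleR])) (by positivity)
    have hr1 : ((k:ℝ)*lam^2 + ((n:ℝ)-k))/((n:ℝ)*lam) < 1 := by
      rw [div_lt_one (by positivity)]
      exact hnum
    have hg1 : Tendsto (fun m : ℕ =>
        1 - lam^(-c) * (((k:ℝ)*lam^2 + ((n:ℝ)-k))/((n:ℝ)*lam))^m) atTop (nhds 1) := by
      have h0 : Tendsto (fun m : ℕ => lam^(-c) * (((k:ℝ)*lam^2 + ((n:ℝ)-k))/((n:ℝ)*lam))^m)
          atTop (nhds 0) := by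
        have := (tendsto_pow_atTop_nhds_zero_of_lt_one hr0 hr1).const_mul (lam^(-c))
        simpa using this
      have := h0.const_sub 1
      simpa using this
    exact tendsto_of_tendsto_of_tendsto_of_le_of_le hg1 tendsto_const_nhds hlow hupp

/-- For odd `n`, as the number of unit-weight delegators tends to infinity, the
post-delegation winning probability of A converges to the equal-weight winning probability. -/
theorem stmt_10 {n : ℕ} (hn : Odd n) (ω : Fin n → ℕ) (p : ℝ) (hp0 : 0 < p) (hp1 : p < 1) :
    Tendsto (fun m => Pd p ω m) atTop (nhds (PA p (fun _ : Fin n => 1))) := by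
  classical
  have hPd : ∀ m : ℕ, Pd p ω m = ∑ S : Finset (Fin n),
      p ^ S.card * (1 - p) ^ (n - S.card) *
      (∑ d : Fin m → Fin n, ((1:ℝ)/n)^m * G (wpost ω d) S) := by
    intro m
    unfold Pd PA
    simp_rw [Finset.mul_sum]
    rw [Finset.sum_comm]
    refine Finset.sum_congr rfl fun S _ => ?_
    exact Finset.sum_congr rfl fun d _ => by ring
  simp only [hPd]
  rw [show PA p (fun _ : Fin n => 1) = ∑ S : Finset (Fin n),
      p ^ S.card * (1 - p) ^ (n - S.card) * G (fun _ : Fin n => 1) S from rfl]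
  apply tendsto_finset_sum
  intro S _
  exact (key hn ω S).const_mul _
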